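/- arXiv:2303.12764 — 2 statements merged into one kernel-verified Lean document; each statement's English description precedes it below -/
import Mathlib

section
/- Assume Φ is irreducible. Then the Cartan matrix C of Φ is invertible over ℚ, and every entry of the inverse matrix C⁻¹ is a positive rational number. -/
/-!
Context: a finite, reduced, crystallographic root system Φ spanning a
finite-dimensional ℚ-vector space V, with positive system Φ⁺ and base of
simple roots Δ enumerated as α_1, …, α_r (a basis of V indexed by Fin r);
the Cartan matrix C has entries C j i = ⟨α_i, α_j∨⟩.  Φ is irreducible if Δ
cannot be written as a disjoint union of two nonempty subsets Δ₁, Δ₂ with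
⟨α, β∨⟩ = 0 for all α ∈ Δ₁, β ∈ Δ₂.

STATEMENT 4: Assume Φ is irreducible.  Then the Cartan matrix C of Φ is
invertible over ℚ, and every entry of the inverse matrix C⁻¹ is a positive
rational number.
-/

theorem cartan_matrix_inverse_entries_pos
    {V : Type*} [AddCommGroup V] [Module ℚ V] [FiniteDimensional ℚ V]
    {r : ℕ}
    -- the (finite, reduced, crystallographic) root system Φ spanning V
    (Φ : Finset V) (hΦspan : Submodule.span ℚ (Φ : Set V) = ⊤)
    (hΦ0 : (0 : V) ∉ Φ)
    -- coroots, viewed via the evaluation pairing ⟨v, μ⟩ = μ v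
    (coroot : V → Module.Dual ℚ V)
    (hcr2 : ∀ γ ∈ Φ, coroot γ γ = 2)
    (hstab : ∀ γ ∈ Φ, ∀ δ ∈ Φ, δ - (coroot γ δ) • γ ∈ Φ)
    (hcrys : ∀ γ ∈ Φ, ∀ δ ∈ Φ, ∃ n : ℤ, coroot γ δ = (n : ℚ))
    (hred : ∀ γ ∈ Φ, ∀ t : ℚ, t • γ ∈ Φ → t = 1 ∨ t = -1)
    -- a fixed positive system Φ⁺
    (Φpos : Finset V) (hpossub : Φpos ⊆ Φ)
    (hdecomp : ∀ γ ∈ Φ, γ ∈ Φpos ∨ -γ ∈ Φpos)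
    (hposneg : ∀ γ ∈ Φpos, -γ ∉ Φpos)
    -- the simple roots Δ, forming a basis of V, every positive root being a
    -- nonnegative combination of them
    (Δ : Module.Basis (Fin r) ℚ V) (hΔpos : ∀ i, Δ i ∈ Φpos)
    (hposcomb : ∀ γ ∈ Φpos, ∀ i, 0 ≤ Δ.repr γ i)
    -- the simple coroots form a basis of the dual space
    (Δv : Module.Basis (Fin r) ℚ (Module.Dual ℚ V)) (hΔv : ∀ i, Δv i = coroot (Δ i))
    -- the Cartan matrix
    (C : Matrix (Fin r) (Fin r) ℚ)
    (hC : ∀ j i, C j i = coroot (Δ j) (Δ i))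
    -- Φ is irreducible
    (hirr : ¬ ∃ s : Set (Fin r), s.Nonempty ∧ sᶜ.Nonempty ∧
        ∀ i ∈ s, ∀ j ∈ sᶜ, coroot (Δ j) (Δ i) = 0) :
    IsUnit C ∧ ∀ i j, 0 < C⁻¹ i j := by
  classical
  have hΔΦ : ∀ i, Δ i ∈ Φ := fun i => hpossub (hΔpos i)
  -- every root has all coordinates ≥ 0 or all ≤ 0
  have hsign : ∀ γ ∈ Φ, (∀ i, 0 ≤ Δ.repr γ i) ∨ (∀ i, Δ.repr γ i ≤ 0) := by
    intro γ hγ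
    rcases hdecomp γ hγ with h | h
    · exact Or.inl (hposcomb γ h)
    · right; intro i
      have h1 := hposcomb _ h i
      rw [map_neg] at h1
      simpa using h1
  -- off-diagonal entries are ≤ 0
  have hoff : ∀ i j, i ≠ j → C j i ≤ 0 := by
    intro i j hij
    by_contra hpos
    push_neg at hpos
    rw [hC] at hpos
    have hβ : Δ i - (coroot (Δ j) (Δ i)) • Δ j ∈ Φ := hstab _ (hΔΦ j) _ (hΔΦ i)
    set c := coroot (Δ j) (Δ i) with hc
    have hci : Δ.repr (Δ i - c • Δ j) i = 1 := by
      simp [map_sub, map_smul, Module.Basis.repr_self, Finsupp.single_apply, hij.symm]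
    have hcj : Δ.repr (Δ i - c • Δ j) j = -c := by
      simp [map_sub, map_smul, Module.Basis.repr_self, Finsupp.single_apply, hij]
    rcases hsign _ hβ with h | h
    · have := h j; rw [hcj] at this; linarith
    · have := h i; rw [hci] at this; linarith
  -- symmetry of vanishing
  have hsym0 : ∀ i j, i ≠ j → coroot (Δ j) (Δ i) = 0 → coroot (Δ i) (Δ j) = 0 := by
    intro i j hij h0
    by_contra hne
    have hle : coroot (Δ i) (Δ j) ≤ 0 := by
      have := hoff j i hij.symm; rwa [hC] at this
    have hlt : coroot (Δ i) (Δ j) < 0 := lt_of_le_of_ne hle hne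
    set c := coroot (Δ i) (Δ j) with hc
    have hβ : Δ j - c • Δ i ∈ Φ := hstab _ (hΔΦ i) _ (hΔΦ j)
    have hval : coroot (Δ j) (Δ j - c • Δ i) = 2 := by
      rw [map_sub, map_smul, hcr2 _ (hΔΦ j), smul_eq_mul, h0]
      ring
    have hβ' : (Δ j - c • Δ i) - (2:ℚ) • Δ j ∈ Φ := by
      have := hstab _ (hΔΦ j) _ hβ
      rwa [hval] at this
    have hei : Δ.repr ((Δ j - c • Δ i) - (2:ℚ) • Δ j) i = -c := by
      simp [map_sub, map_smul, Module.Basis.repr_self, Finsupp.single_apply, hij, hij.symm]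
    have hej : Δ.repr ((Δ j - c • Δ i) - (2:ℚ) • Δ j) j = -1 := by
      simp [map_sub, map_smul, Module.Basis.repr_self, Finsupp.single_apply, hij, hij.symm]
      ring
    rcases hsign _ hβ' with h | h
    · have := h j; rw [hej] at this; linarith
    · have := h i; rw [hei] at this; linarith
  -- a positive root other than Δ j has a positive coordinate away from j
  have hexists : ∀ j, ∀ γ ∈ Φpos, γ ≠ Δ j → ∃ i, i ≠ j ∧ 0 < Δ.repr γ i := by
    intro j γ hγ hne
    by_contra h
    push_neg at h
    have hzero : ∀ i, i ≠ j → Δ.repr γ i = 0 := by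
      intro i hi
      exact le_antisymm (h i hi) (hposcomb γ hγ i)
    have hγeq : γ = (Δ.repr γ j) • Δ j := by
      conv_lhs => rw [← Module.Basis.sum_repr Δ γ]
      rw [Finset.sum_eq_single j]
      · intro b _ hb; rw [hzero b hb, zero_smul]
      · intro hb; exact absurd (Finset.mem_univ j) hb
    have hmem : (Δ.repr γ j) • Δ j ∈ Φ := hγeq ▸ hpossub hγ
    rcases hred _ (hΔΦ j) _ hmem with h1 | h1
    · rw [h1, one_smul] at hγeq; exact hne hγeq
    · have h2 := hposcomb γ hγ j
      rw [h1] at h2; linarith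
  -- the sum of positive roots
  set dlt : V := ∑ γ ∈ Φpos, γ with hdlt
  have hxge : ∀ i, (1:ℚ) ≤ Δ.repr dlt i := by
    intro i
    have h1 : Δ.repr dlt i = ∑ γ ∈ Φpos, Δ.repr γ i := by
      rw [hdlt, map_sum]; simp
    rw [h1, ← Finset.add_sum_erase _ _ (hΔpos i)]
    have h2 : Δ.repr (Δ i) i = 1 := by simp
    have h3 : 0 ≤ ∑ γ ∈ Φpos.erase (Δ i), Δ.repr γ i :=
      Finset.sum_nonneg fun γ hγ => hposcomb γ (Finset.mem_of_mem_erase hγ) i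
    rw [h2]; linarith
  -- ⟨dlt, α_j∨⟩ = 2 for every j
  have hdlt2 : ∀ j, coroot (Δ j) dlt = 2 := by
    intro j
    set f : V → V := fun γ => γ - coroot (Δ j) γ • Δ j with hf
    have h2 : coroot (Δ j) (Δ j) = 2 := hcr2 _ (hΔΦ j)
    have hfval : ∀ γ : V, coroot (Δ j) (f γ) = - coroot (Δ j) γ := by
      intro γ
      simp only [hf, map_sub, map_smul, smul_eq_mul, h2]
      ring
    have hff : ∀ γ : V, f (f γ) = γ := by
      intro γ
      have h3 := hfval γ
      simp only [hf] at h3 ⊢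
      rw [h3]
      module
    have hmaps : ∀ γ ∈ Φpos.erase (Δ j), f γ ∈ Φpos.erase (Δ j) := by
      intro γ hγ
      obtain ⟨hne, hγp⟩ := Finset.mem_erase.mp hγ
      have hfΦ : f γ ∈ Φ := hstab _ (hΔΦ j) _ (hpossub hγp)
      obtain ⟨i, hij, hipos⟩ := hexists j γ hγp hne
      have hfi : Δ.repr (f γ) i = Δ.repr γ i := by
        simp [hf, map_sub, map_smul, Module.Basis.repr_self, Finsupp.single_apply, hij.symm]
      have hfpos : f γ ∈ Φpos := by
        rcases hdecomp _ hfΦ with h | h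
        · exact h
        · exfalso
          have h4 := hposcomb _ h i
          rw [map_neg] at h4
          simp only [Finsupp.coe_neg, Pi.neg_apply] at h4
          rw [hfi] at h4
          linarith
      refine Finset.mem_erase.mpr ⟨?_, hfpos⟩
      intro heq
      have hγval : γ = - Δ j := by
        have : γ = f (Δ j) := by rw [← heq, hff]
        rw [this]
        show Δ j - coroot (Δ j) (Δ j) • Δ j = -Δ j
        rw [h2]; module
      have hmem2 : -γ ∈ Φpos := by rw [hγval, neg_neg]; exact hΔpos j
      exact hposneg γ hγp hmem2
    have hsum1 : ∑ γ ∈ Φpos, f γ = dlt - coroot (Δ j) dlt • Δ j := by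
      simp only [hf]
      rw [Finset.sum_sub_distrib, ← Finset.sum_smul, hdlt, map_sum]
    have hsum2 : ∑ γ ∈ Φpos, f γ = dlt - (2:ℚ) • Δ j := by
      rw [← Finset.add_sum_erase _ _ (hΔpos j)]
      have hfj : f (Δ j) = - Δ j := by
        show Δ j - coroot (Δ j) (Δ j) • Δ j = -Δ j
        rw [h2]; module
      have hrest : ∑ γ ∈ Φpos.erase (Δ j), f γ = ∑ γ ∈ Φpos.erase (Δ j), γ :=
        Finset.sum_nbij' f f hmaps hmaps (fun a _ => hff a) (fun a _ => hff a)
          (fun a _ => rfl)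
      rw [hfj, hrest, hdlt, ← Finset.add_sum_erase _ _ (hΔpos j)]
      module
    have h4 : coroot (Δ j) dlt • Δ j = (2:ℚ) • Δ j :=
      sub_right_inj.mp (hsum1.symm.trans hsum2)
    have h5 : (coroot (Δ j) dlt - 2) • Δ j = 0 := by rw [sub_smul, h4, sub_self]
    rcases smul_eq_zero.mp h5 with h | h
    · exact sub_eq_zero.mp h
    · exact absurd h (Δ.ne_zero j)
  -- the positive vector x with C *ᵥ x = 2
  set x : Fin r → ℚ := fun i => Δ.repr dlt i with hxdef
  have hxpos : ∀ i, 0 < x i := fun i => lt_of_lt_of_le one_pos (hxge i)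
  have hCx : ∀ j, C.mulVec x j = 2 := by
    intro j
    have h1 : C.mulVec x j = ∑ i, coroot (Δ j) (Δ i) * x i := by
      simp [Matrix.mulVec, dotProduct, hC]
    have h2 : ∑ i, coroot (Δ j) (Δ i) * x i = coroot (Δ j) (∑ i, x i • Δ i) := by
      rw [map_sum]
      refine Finset.sum_congr rfl fun i _ => ?_
      rw [map_smul, smul_eq_mul, mul_comm]
    have h3 : ∑ i, x i • Δ i = dlt := Module.Basis.sum_repr Δ dlt
    rw [h1, h2, h3, hdlt2 j]
  -- Lemma A: C *ᵥ y ≥ 0 → y ≥ 0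
  have lemA : ∀ y : Fin r → ℚ, (∀ i, 0 ≤ C.mulVec y i) → ∀ i, 0 ≤ y i := by
    intro y hy
    by_contra h
    push_neg at h
    obtain ⟨i1, hi1⟩ := h
    obtain ⟨i0, -, hmax⟩ := Finset.exists_max_image Finset.univ (fun i => -y i / x i)
      ⟨i1, Finset.mem_univ i1⟩
    set t : ℚ := -y i0 / x i0 with ht
    have htpos : 0 < t := by
      have h1 := hmax i1 (Finset.mem_univ i1)
      have h2 : 0 < -y i1 / x i1 := div_pos (by linarith) (hxpos i1)
      linarith
    set z : Fin r → ℚ := y + t • x with hz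
    have hz0 : ∀ k, 0 ≤ z k := by
      intro k
      have h1 := hmax k (Finset.mem_univ k)
      have h2 : -y k ≤ t * x k := (div_le_iff₀ (hxpos k)).mp h1
      simp only [hz, Pi.add_apply, Pi.smul_apply, smul_eq_mul]
      linarith
    have hzi0 : z i0 = 0 := by
      have hx0 : x i0 ≠ 0 := ne_of_gt (hxpos i0)
      simp only [hz, Pi.add_apply, Pi.smul_apply, smul_eq_mul, ht]
      rw [div_mul_cancel₀ _ hx0]
      ring
    have hpos : 0 < C.mulVec z i0 := by
      rw [hz, Matrix.mulVec_add, Matrix.mulVec_smul]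
      simp only [Pi.add_apply, Pi.smul_apply, smul_eq_mul, hCx i0]
      have := hy i0
      nlinarith
    have hnonpos : C.mulVec z i0 ≤ 0 := by
      rw [Matrix.mulVec, dotProduct]
      refine Finset.sum_nonpos fun k _ => ?_
      by_cases hk : k = i0
      · rw [hk, hzi0, mul_zero]
      · exact mul_nonpos_of_nonpos_of_nonneg (hoff k i0 hk) (hz0 k)
    linarith
  -- invertibility
  have hker : ∀ v : Fin r → ℚ, C.mulVec v = 0 → v = 0 := by
    intro v hv
    have h1 : ∀ i, 0 ≤ v i := lemA v (fun i => by rw [hv]; rfl)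
    have h2 : ∀ i, 0 ≤ (-v) i := by
      refine lemA (-v) fun i => ?_
      rw [Matrix.mulVec_neg, hv]
      simp
    funext i
    have ha := h1 i; have hb := h2 i
    simp only [Pi.neg_apply] at hb
    simp only [Pi.zero_apply]
    linarith
  have hunit : IsUnit C := by
    rw [← Matrix.mulVec_injective_iff_isUnit]
    intro u v huv
    have hw : C.mulVec (u - v) = 0 := by
      rw [Matrix.mulVec_sub, huv, sub_self]
    exact sub_eq_zero.mp (hker _ hw)
  have hdet : IsUnit C.det := (Matrix.isUnit_iff_isUnit_det C).mp hunit
  have hCC : C * C⁻¹ = 1 := Matrix.mul_nonsing_inv C hdet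
  refine ⟨hunit, fun i j => ?_⟩
  set y : Fin r → ℚ := fun k => C⁻¹ k j with hy
  have hmv : ∀ a, C.mulVec y a = if a = j then 1 else 0 := by
    intro a
    have h1 : C.mulVec y a = (C * C⁻¹) a j := by
      simp [Matrix.mulVec, dotProduct, Matrix.mul_apply, hy]
    rw [h1, hCC, Matrix.one_apply]
  have hy0 : ∀ a, 0 ≤ y a := by
    refine lemA y fun a => ?_
    rw [hmv a]
    split_ifs <;> norm_num
  -- strict positivity
  by_contra hle
  push_neg at hle
  have hyi : y i = 0 := le_antisymm hle (hy0 i)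
  set s : Set (Fin r) := {k | y k = 0} with hs
  have hsne : s.Nonempty := ⟨i, hyi⟩
  have hscne : sᶜ.Nonempty := by
    by_contra hcon
    rw [Set.not_nonempty_iff_eq_empty, ← Set.compl_univ, compl_inj_iff] at hcon
    have hall : ∀ k, y k = 0 := fun k => by
      have : k ∈ s := hcon ▸ Set.mem_univ k
      exact this
    have := hmv j
    simp only [if_pos rfl] at this
    rw [Matrix.mulVec, dotProduct] at this
    have hzero : ∑ k, C j k * y k = 0 :=
      Finset.sum_eq_zero fun k _ => by rw [hall k, mul_zero]
    rw [hzero] at this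
    norm_num at this
  -- derive zero block
  have hblock : ∀ a ∈ s, ∀ b ∈ sᶜ, coroot (Δ a) (Δ b) = 0 := by
    intro a ha b hb
    have hya : y a = 0 := ha
    have hyb : y b ≠ 0 := hb
    have hab : a ≠ b := fun h => hyb (h ▸ hya)
    have hterm : ∀ k ∈ Finset.univ, C a k * y k ≤ 0 := by
      intro k _
      by_cases hk : k ∈ s
      · have : y k = 0 := hk
        rw [this, mul_zero]
      · have hka : k ≠ a := fun h => hk (h ▸ ha)
        exact mul_nonpos_of_nonpos_of_nonneg (hoff k a hka) (hy0 k)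
    have hsum : ∑ k, C a k * y k = if a = j then 1 else 0 := by
      rw [← hmv a, Matrix.mulVec, dotProduct]
    have hnonpos : ∑ k, C a k * y k ≤ 0 := Finset.sum_nonpos hterm
    have haj : ¬ (a = j) := by
      intro h
      rw [hsum, if_pos h] at hnonpos
      norm_num at hnonpos
    have hzero : ∑ k, C a k * y k = 0 := by rw [hsum, if_neg haj]
    have hterm0 : C a b * y b = 0 :=
      (Finset.sum_eq_zero_iff_of_nonpos hterm).mp hzero b (Finset.mem_univ b)
    have hCab : C a b = 0 := by
      rcases mul_eq_zero.mp hterm0 with h | h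
      · exact h
      · exact absurd h hyb
    rw [hC] at hCab
    exact hCab
  refine hirr ⟨s, hsne, hscne, fun a ha b hb => ?_⟩
  have hab : b ≠ a := by
    intro h
    exact (hb : b ∉ s) (h ▸ ha)
  exact hsym0 b a hab (hblock a ha b hb)
end

section
/- Let μ ∈ V* satisfy ⟨α, μ⟩ > 0 for every α ∈ Δ, and suppose μ = Σ_{α∈Δ} n_α α∨ with all n_α ∈ ℚ_{≥0}. Let I ⊊ Δ and let w ∈ W^I ∩ Ω_I. Then w ∈ Ω_∅; that is, if (wμ, ϖ_α) > 0 for all α ∈ Δ ∖ I and w⁻¹γ ∈ Φ⁺ for all γ ∈ Φ_I⁺, then (wμ, ϖ_α) > 0 for all α ∈ Δ. Equivalently, writing wμ = Σ_{α∈Δ} m_α α∨, if m_α > 0 for all α ∉ I then m_α > 0 for all α ∈ Δ. -/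
/-!
Context: a finite, reduced, crystallographic root system Φ spanning a
finite-dimensional ℚ-vector space V, with positive system Φ⁺, base of simple
roots Δ (a basis of V, indexed by ι), coroots in V* (simple coroots forming a
basis of V*), fundamental coweights ϖ (basis of V* dual to Δ), a
Weyl-group-invariant inner product B on V*, and Weyl group W (generated by
the reflections of the roots) acting contragrediently on V*.  For I ⊆ Δ,
Φ_I⁺ := Φ ∩ span_ℚ(I) ∩ Φ⁺, W^I := {w ∈ W : w⁻¹γ ∈ Φ⁺ for all γ ∈ Φ_I⁺},
and for μ ∈ V*, Ω_I := {w ∈ W : (wμ, ϖ_α) > 0 for all α ∈ Δ ∖ I}.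

STATEMENT 7: Let μ ∈ V* satisfy ⟨α, μ⟩ > 0 for every α ∈ Δ, and suppose
μ = Σ_{α∈Δ} n_α α∨ with all n_α ∈ ℚ_{≥0}.  Let I ⊊ Δ and let
w ∈ W^I ∩ Ω_I.  Then w ∈ Ω_∅; that is, if (wμ, ϖ_α) > 0 for all α ∈ Δ ∖ I
and w⁻¹γ ∈ Φ⁺ for all γ ∈ Φ_I⁺, then (wμ, ϖ_α) > 0 for all α ∈ Δ.
-/

theorem mem_omega_empty_of_mem_omega
    {V : Type*} [AddCommGroup V] [Module ℚ V] [FiniteDimensional ℚ V]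
    {ι : Type*} [Fintype ι] [DecidableEq ι]
    -- the (finite, reduced, crystallographic) root system Φ spanning V
    (Φ : Finset V) (hΦspan : Submodule.span ℚ (Φ : Set V) = ⊤)
    (hΦ0 : (0 : V) ∉ Φ)
    -- coroots, viewed via the evaluation pairing ⟨v, μ⟩ = μ v
    (coroot : V → Module.Dual ℚ V)
    (hcr2 : ∀ γ ∈ Φ, coroot γ γ = 2)
    (hstab : ∀ γ ∈ Φ, ∀ δ ∈ Φ, δ - (coroot γ δ) • γ ∈ Φ)
    (hcrys : ∀ γ ∈ Φ, ∀ δ ∈ Φ, ∃ n : ℤ, coroot γ δ = (n : ℚ))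
    (hred : ∀ γ ∈ Φ, ∀ t : ℚ, t • γ ∈ Φ → t = 1 ∨ t = -1)
    -- a fixed positive system Φ⁺
    (Φpos : Finset V) (hpossub : Φpos ⊆ Φ)
    (hdecomp : ∀ γ ∈ Φ, γ ∈ Φpos ∨ -γ ∈ Φpos)
    (hposneg : ∀ γ ∈ Φpos, -γ ∉ Φpos)
    -- the simple roots Δ, forming a basis of V, every positive root being a
    -- nonnegative combination of them
    (Δ : Module.Basis ι ℚ V) (hΔpos : ∀ i, Δ i ∈ Φpos)
    (hposcomb : ∀ γ ∈ Φpos, ∀ i, 0 ≤ Δ.repr γ i)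
    -- the simple coroots form a basis of the dual space
    (Δv : Module.Basis ι ℚ (Module.Dual ℚ V)) (hΔv : ∀ i, Δv i = coroot (Δ i))
    -- the fundamental coweights: the basis of V* dual to the simple roots
    (ϖ : ι → Module.Dual ℚ V) (hϖ : ∀ i j, ϖ i (Δ j) = if j = i then 1 else 0)
    -- a W-invariant inner product on V* (W acting contragrediently on V*)
    (B : Module.Dual ℚ V →ₗ[ℚ] Module.Dual ℚ V →ₗ[ℚ] ℚ)
    (hBsymm : ∀ μ ν, B μ ν = B ν μ)
    (hBposdef : ∀ μ : Module.Dual ℚ V, μ ≠ 0 → 0 < B μ μ)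
    (hBinv : ∀ w ∈ Subgroup.closure
        {w : V ≃ₗ[ℚ] V | ∃ γ, ∃ hγ : γ ∈ Φ, w = Module.reflection (hcr2 γ hγ)},
      ∀ μ ν : Module.Dual ℚ V, B (w.symm.dualMap μ) (w.symm.dualMap ν) = B μ ν) :
    ∀ (μ : Module.Dual ℚ V) (n : ι → ℚ),
      (∀ i, 0 < μ (Δ i)) →
      (∀ i, 0 ≤ n i) →
      μ = (∑ i, n i • coroot (Δ i)) →
      ∀ (I : Set ι), I ≠ Set.univ →
      ∀ w ∈ Subgroup.closure
          {w : V ≃ₗ[ℚ] V | ∃ γ, ∃ hγ : γ ∈ Φ, w = Module.reflection (hcr2 γ hγ)},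
        (∀ γ ∈ Φpos, γ ∈ Submodule.span ℚ (⇑Δ '' I) → w⁻¹ γ ∈ Φpos) →
        (∀ i ∉ I, 0 < B (w.symm.dualMap μ) (ϖ i)) →
        ∀ i, 0 < B (w.symm.dualMap μ) (ϖ i) := by
  classical
  -- Step 1: invariance under a reflection gives the key formula for B against a coroot.
  have hBcoroot : ∀ γ, ∀ hγ : γ ∈ Φ, ∀ ν : Module.Dual ℚ V,
      2 * B ν (coroot γ) = ν γ * B (coroot γ) (coroot γ) := by
    intro γ hγ ν
    have hs : (Module.reflection (hcr2 γ hγ)) ∈ Subgroup.closure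
        {w : V ≃ₗ[ℚ] V | ∃ γ, ∃ hγ : γ ∈ Φ, w = Module.reflection (hcr2 γ hγ)} :=
      Subgroup.subset_closure ⟨γ, hγ, rfl⟩
    have hdual : ∀ ρ : Module.Dual ℚ V,
        (Module.reflection (hcr2 γ hγ)).symm.dualMap ρ = ρ - ρ γ • coroot γ := by
      intro ρ
      ext v
      simp [Module.reflection_apply, mul_comm]
    have h := hBinv _ hs ν (coroot γ)
    rw [hdual, hdual] at h
    simp only [map_sub, map_smul, LinearMap.sub_apply, LinearMap.smul_apply,
      smul_eq_mul, hcr2 γ hγ] at h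
    have hsym := hBsymm ν (coroot γ)
    nlinarith [h, hsym]
  intro μ n hμpos hn hμeq I hI w hw hWI hΩ
  set lam : Module.Dual ℚ V := w.symm.dualMap μ with hlam
  set m : ι → ℚ := fun i => Δv.repr lam i with hm
  set c : ι → ℚ := fun i => B (Δv i) (Δv i) with hc
  have hcpos : ∀ i, 0 < c i := fun i => hBposdef _ (Δv.ne_zero i)
  have hBΔv : ∀ (ν : Module.Dual ℚ V) (i : ι), B ν (Δv i) = ν (Δ i) * (c i / 2) := by
    intro ν i
    have h := hBcoroot (Δ i) (hpossub (hΔpos i)) ν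
    rw [← hΔv i] at h
    rw [hc]
    linarith
  have hlsum : lam = ∑ j, m j • Δv j := (Δv.sum_repr lam).symm
  have hBlw : ∀ i, B lam (ϖ i) = m i * (c i / 2) := by
    intro i
    have h1 : B lam (ϖ i) = ∑ j, m j * B (Δv j) (ϖ i) := by
      conv_lhs => rw [hlsum]
      simp [map_sum, LinearMap.sum_apply, smul_eq_mul]
    rw [h1]
    have h2 : ∀ j, m j * B (Δv j) (ϖ i) = if j = i then m j * (c j / 2) else 0 := by
      intro j
      rw [hBsymm, hBΔv, hϖ]
      split <;> ring
    simp only [h2]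
    simp
  -- Step 2: μ is positive on all positive roots.
  have hμposroot : ∀ γ ∈ Φpos, 0 < μ γ := by
    intro γ hγ
    have hγΦ := hpossub hγ
    have hne : γ ≠ 0 := fun h => hΦ0 (h ▸ hγΦ)
    have hrw : μ γ = ∑ j, Δ.repr γ j * μ (Δ j) := by
      conv_lhs => rw [← Δ.sum_repr γ]
      simp only [map_sum, map_smul, smul_eq_mul]
    rw [hrw]
    apply Finset.sum_pos'
    · exact fun j _ => mul_nonneg (hposcomb γ hγ j) (hμpos j).le
    · obtain ⟨j, hj⟩ : ∃ j, Δ.repr γ j ≠ 0 := by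
        by_contra hall
        push_neg at hall
        exact hne (Δ.repr.map_eq_zero_iff.mp (Finsupp.ext hall))
      exact ⟨j, Finset.mem_univ j,
        mul_pos ((hposcomb γ hγ j).lt_of_ne (Ne.symm hj)) (hμpos j)⟩
  -- Step 3: Cartan off-diagonal entries are nonpositive.
  have hcartan : ∀ i j, i ≠ j → Δv j (Δ i) ≤ 0 := by
    intro i j hij
    by_contra hpos'
    push_neg at hpos'
    rw [hΔv] at hpos'
    have hγ : Δ i - coroot (Δ j) (Δ i) • Δ j ∈ Φ :=
      hstab (Δ j) (hpossub (hΔpos j)) (Δ i) (hpossub (hΔpos i))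
    have hri : Δ.repr (Δ i - coroot (Δ j) (Δ i) • Δ j) i = 1 := by
      simp [Finsupp.single_apply, hij, Ne.symm hij]
    have hrj : Δ.repr (Δ i - coroot (Δ j) (Δ i) • Δ j) j = -(coroot (Δ j) (Δ i)) := by
      simp [Finsupp.single_apply, hij, Ne.symm hij]
    rcases hdecomp _ hγ with h | h
    · have := hposcomb _ h j
      rw [hrj] at this
      linarith
    · have := hposcomb _ h i
      rw [map_neg, Finsupp.neg_apply, hri] at this
      linarith
  -- Step 4: lam is positive on simple roots indexed by I.
  have hlDI : ∀ i, i ∈ I → 0 < lam (Δ i) := by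
    intro i hiI
    have hw' : w⁻¹ (Δ i) ∈ Φpos :=
      hWI (Δ i) (hΔpos i) (Submodule.subset_span ⟨i, hiI, rfl⟩)
    have hfix : lam (Δ i) = μ (w⁻¹ (Δ i)) := rfl
    rw [hfix]
    exact hμposroot _ hw'
  have hlD : ∀ k, lam (Δ k) = ∑ j, m j * Δv j (Δ k) := by
    intro k
    conv_lhs => rw [hlsum]
    simp [smul_eq_mul]
  -- Step 5: the set J of bad indices, and the element lJ.
  set J : Finset ι := Finset.univ.filter (fun j => j ∈ I ∧ m j ≤ 0) with hJ
  have hmJc : ∀ j ∉ J, 0 < m j := by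
    intro j hj
    rw [hJ, Finset.mem_filter] at hj
    push_neg at hj
    by_cases hjI : j ∈ I
    · exact hj (Finset.mem_univ j) hjI
    · have := hΩ j hjI
      rw [hBlw] at this
      nlinarith [hcpos j]
  set lJ : Module.Dual ℚ V := ∑ j ∈ J, m j • Δv j with hlJdef
  have hlJΔ : ∀ k, lJ (Δ k) = ∑ j ∈ J, m j * Δv j (Δ k) := by
    intro k
    rw [hlJdef]
    simp [smul_eq_mul]
  have hJpos : ∀ i ∈ J, 0 < lJ (Δ i) := by
    intro i hi
    obtain ⟨-, hiI, hmi⟩ := Finset.mem_filter.mp hi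
    have hsplit := (Finset.sum_filter_add_sum_filter_not Finset.univ
      (fun j => j ∈ I ∧ m j ≤ 0) (fun j => m j * Δv j (Δ i))).symm
    have hrest : ∑ j ∈ Finset.univ.filter (fun j => ¬(j ∈ I ∧ m j ≤ 0)),
        m j * Δv j (Δ i) ≤ 0 := by
      apply Finset.sum_nonpos
      intro j hj
      have hjJ : j ∉ J := by
        rw [hJ, Finset.mem_filter]
        intro hmem
        exact (Finset.mem_filter.mp hj).2 hmem.2
      have hij : i ≠ j := by
        rintro rfl
        exact (Finset.mem_filter.mp hj).2 ⟨hiI, hmi⟩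
      exact mul_nonpos_iff.mpr (Or.inl ⟨(hmJc j hjJ).le, hcartan i j hij⟩)
    have h1 := hlD i
    have h2 := hlJΔ i
    have h3 := hlDI i hiI
    rw [hsplit] at h1
    rw [h2, ← hJ] at *
    linarith [h1, h3, hrest]
  have hBlJ : B lJ lJ ≤ 0 := by
    have h1 : B lJ lJ = ∑ i ∈ J, m i * (lJ (Δ i) * (c i / 2)) := by
      nth_rewrite 2 [hlJdef]
      rw [map_sum]
      refine Finset.sum_congr rfl fun i _ => ?_
      rw [map_smul, smul_eq_mul, hBΔv]
    rw [h1]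
    apply Finset.sum_nonpos
    intro i hi
    have hmi := (Finset.mem_filter.mp hi).2.2
    have := hJpos i hi
    have := hcpos i
    exact mul_nonpos_iff.mpr (Or.inr ⟨hmi, by positivity⟩)
  have hlJ0 : lJ = 0 := by
    by_contra h
    exact absurd (hBposdef lJ h) (not_lt.mpr hBlJ)
  have hJempty : J = ∅ := by
    by_contra h
    obtain ⟨i, hi⟩ := Finset.nonempty_of_ne_empty h
    have := hJpos i hi
    rw [hlJ0] at this
    simp at this
  intro i
  rw [hBlw]
  have hmi : 0 < m i := hmJc i (by rw [hJempty]; exact Finset.notMem_empty i)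
  have := hcpos i
  positivity
end
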